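/- Assume π⁻ ≤ α_r·πʷ ≤ π⁺. Define the optimal dispatch functions w_h*(g) := w_h^IM if g < Γ_IM; clamp(η_h·(w̲_r/α_r − g), w̲_h, w̄_h) if Γ_IM ≤ g < Γ_NZ1; w_h^NZ if Γ_NZ1 ≤ g ≤ Γ_NZ2; clamp(η_h·(w̄_r/α_r − g), w̲_h, w̄_h) if Γ_NZ2 < g ≤ Γ_EX; w_h^EX if g > Γ_EX; and w_r*(g) := w̲_r if g < Γ_NZ1; α_r·(w_h^NZ/η_h + g) if Γ_NZ1 ≤ g ≤ Γ_NZ2; w̄_r if g > Γ_NZ2. Then the net exchange z*(g) := w_r*(g)/α_r − w_h*(g)/η_h − g satisfies: z*(g) > 0 for g < Γ_IM, z*(g) = 0 for Γ_IM ≤ g ≤ Γ_EX, and z*(g) < 0 for g > Γ_EX. -/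
import Mathlib


open Set

noncomputable section

/-- Net electricity exchange. -/
def netz (αr ηh wh wr g : ℝ) : ℝ := wr / αr - wh / ηh - g

/-- Electricity payment under net metering. -/
def epay (πp πm π0 αr ηh wh wr g : ℝ) : ℝ :=
  πp * max (netz αr ηh wh wr g) 0 + πm * min (netz αr ηh wh wr g) 0 + π0

/-- WDP profit. -/
def profit (πw πp πm π0 αr αh ηh : ℝ) (C : ℝ → ℝ) (wh wr g : ℝ) : ℝ :=
  πw * (wh + wr) - epay πp πm π0 αr ηh wh wr g - C (wh / αh)

/-- clamp(x, a, b) = max(a, min(x, b)). -/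
def clampR (x a b : ℝ) : ℝ := max a (min x b)

/-- Value function: sup of profit over the feasible rectangle. -/
def Pstar (πw πp πm π0 αr αh ηh : ℝ) (C : ℝ → ℝ) (wlh wuh wlr wur g : ℝ) : ℝ :=
  sSup ((fun p : ℝ × ℝ => profit πw πp πm π0 αr αh ηh C p.1 p.2 g) ''
    (Icc wlh wuh ×ˢ Icc wlr wur))

/-- sign of the optimal net exchange z*(g) across the three modes. -/
theorem optimal_grid_exchange
    (πp πm π0 πw αh ηh αr wlh wuh wlr wur : ℝ) (C : ℝ → ℝ)
    (hπ : πm ≤ πp) (hπm : 0 ≤ πm) (hπw : 0 ≤ πw)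
    (hαh : 0 < αh) (hηh : 0 < ηh) (hαr : 0 < αr)
    (hwlh : 0 ≤ wlh) (hwhb : wlh ≤ wuh) (hwlr : 0 ≤ wlr) (hwrb : wlr ≤ wur)
    (hC : StrictConvexOn ℝ univ C) (hCd : Differentiable ℝ C) (hCm : Monotone C)
    (Wfun : ℝ → ℝ)
    (hWfun : ∀ δ : ℝ, Wfun δ ∈ Icc wlh wuh ∧
      ∀ w ∈ Icc wlh wuh,
        (πw + δ / ηh) * w - C (w / αh) ≤ (πw + δ / ηh) * Wfun δ - C (Wfun δ / αh))
    (hmid1 : πm ≤ αr * πw) (hmid2 : αr * πw ≤ πp) :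
    ∀ g : ℝ,
      (fun zs =>
        (g < wlr / αr - Wfun πp / ηh → 0 < zs) ∧
        (wlr / αr - Wfun πp / ηh ≤ g → g ≤ wur / αr - Wfun πm / ηh → zs = 0) ∧
        (wur / αr - Wfun πm / ηh < g → zs < 0))
      ((if g < wlr / αr - Wfun (αr * πw) / ηh then wlr
        else if g ≤ wur / αr - Wfun (αr * πw) / ηh then αr * (Wfun (αr * πw) / ηh + g)
        else wur) / αr -
       (if g < wlr / αr - Wfun πp / ηh then Wfun πp
        else if g < wlr / αr - Wfun (αr * πw) / ηh then clampR (ηh * (wlr / αr - g)) wlh wuh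
        else if g ≤ wur / αr - Wfun (αr * πw) / ηh then Wfun (αr * πw)
        else if g ≤ wur / αr - Wfun πm / ηh then clampR (ηh * (wur / αr - g)) wlh wuh
        else Wfun πm) / ηh - g) := by
  have mono : ∀ δ1 δ2 : ℝ, δ1 ≤ δ2 → Wfun δ1 ≤ Wfun δ2 := by
    intro δ1 δ2 h
    rcases eq_or_lt_of_le h with rfl | h
    · exact le_refl _
    · have h1 := (hWfun δ1).2 (Wfun δ2) (hWfun δ2).1
      have h2 := (hWfun δ2).2 (Wfun δ1) (hWfun δ1).1
      have hd : δ1 / ηh < δ2 / ηh := by gcongr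
      by_contra hc
      push_neg at hc
      nlinarith [h1, h2, mul_pos (sub_pos.mpr hd) (sub_pos.mpr hc)]
  have hb1 := (hWfun πp).1
  have hb0 := (hWfun (αr * πw)).1
  have hbm := (hWfun πm).1
  simp only [mem_Icc] at hb1 hb0 hbm
  have h01 : Wfun (αr * πw) ≤ Wfun πp := mono _ _ hmid2
  have hm0 : Wfun πm ≤ Wfun (αr * πw) := mono _ _ hmid1
  have hdiv1 : Wfun πm / ηh ≤ Wfun (αr * πw) / ηh := by gcongr
  have hdiv2 : Wfun (αr * πw) / ηh ≤ Wfun πp / ηh := by gcongr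
  have hdivr : wlr / αr ≤ wur / αr := by gcongr
  intro g
  refine ⟨?_, ?_, ?_⟩
  · intro hg
    have hg1 : g < wlr / αr - Wfun (αr * πw) / ηh := by linarith
    rw [if_pos hg1, if_pos hg]
    linarith
  · intro hg hg'
    by_cases hA : g < wlr / αr - Wfun (αr * πw) / ηh
    · rw [if_pos hA]
      by_cases hD1 : g < wlr / αr - Wfun πp / ηh
      · rw [if_pos hD1]; linarith
      · rw [if_neg hD1, if_pos hA]
        push_neg at hD1
        have e1 := mul_le_mul_of_nonneg_left
          (show wlr / αr - g ≤ Wfun πp / ηh by linarith) hηh.le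
        have e2 := mul_le_mul_of_nonneg_left
          (show Wfun (αr * πw) / ηh ≤ wlr / αr - g by linarith) hηh.le
        rw [← mul_div_assoc, mul_div_cancel_left₀ _ hηh.ne'] at e1 e2
        have hub : ηh * (wlr / αr - g) ≤ wuh := by linarith
        have hlb : wlh ≤ ηh * (wlr / αr - g) := by linarith
        have hcl : clampR (ηh * (wlr / αr - g)) wlh wuh = ηh * (wlr / αr - g) := by
          rw [clampR, min_eq_left hub, max_eq_right hlb]
        rw [hcl, mul_div_cancel_left₀ _ hηh.ne']
        ring
    · rw [if_neg hA]
      have hD1 : ¬ g < wlr / αr - Wfun πp / ηh := by push_neg at hA ⊢; linarith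
      rw [if_neg hD1, if_neg hA]
      by_cases hB : g ≤ wur / αr - Wfun (αr * πw) / ηh
      · rw [if_pos hB, if_pos hB, mul_div_cancel_left₀ _ hαr.ne']
        ring
      · rw [if_neg hB, if_neg hB, if_pos hg']
        push_neg at hB
        have e1 := mul_le_mul_of_nonneg_left
          (show wur / αr - g ≤ Wfun (αr * πw) / ηh by linarith) hηh.le
        have e2 := mul_le_mul_of_nonneg_left
          (show Wfun πm / ηh ≤ wur / αr - g by linarith) hηh.le
        rw [← mul_div_assoc, mul_div_cancel_left₀ _ hηh.ne'] at e1 e2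
        have hub : ηh * (wur / αr - g) ≤ wuh := by linarith
        have hlb : wlh ≤ ηh * (wur / αr - g) := by linarith
        have hcl : clampR (ηh * (wur / αr - g)) wlh wuh = ηh * (wur / αr - g) := by
          rw [clampR, min_eq_left hub, max_eq_right hlb]
        rw [hcl, mul_div_cancel_left₀ _ hηh.ne']
        ring
  · intro hg
    have hc1 : ¬ g < wlr / αr - Wfun (αr * πw) / ηh := by push_neg; linarith
    have hc2 : ¬ g ≤ wur / αr - Wfun (αr * πw) / ηh := by push_neg; linarith
    have hd1 : ¬ g < wlr / αr - Wfun πp / ηh := by push_neg; linarith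
    have hd4 : ¬ g ≤ wur / αr - Wfun πm / ηh := by push_neg; linarith
    rw [if_neg hc1, if_neg hc2, if_neg hd1, if_neg hc1, if_neg hc2, if_neg hd4]
    linarith
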